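/- (Weak converse / Stein upper bound for adaptive channel discrimination) If a sequence of adaptive strategies and tests (P⃗ⁿ, f_n) satisfies E_{Q_{W,P⃗ⁿ}}[f_n] → 0, then limsup_{n→∞} (−1/n) log E_{Q_{W̄,P⃗ⁿ}}[1−f_n] ≤ sup_{x∈X} D(W_x‖W̄_x). -/

import Mathlib

open Filter Finset

/-- `W` is a (classical) channel from `X` to `Y` with full-support outputs. -/
def IsChannel {X Y : Type*} [Fintype Y] (W : X → Y → ℝ) : Prop :=
  ∀ x, (∀ y, 0 < W x y) ∧ ∑ y, W x y = 1

/-- An adaptive strategy: for each step `k`, a conditional distribution of the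
`(k+1)`-st input given the first `k` input-output pairs. -/
def IsStrategy {X Y : Type*} [Fintype X]
    (strat : (k : ℕ) → (Fin k → X × Y) → X → ℝ) : Prop :=
  ∀ k h, (∀ x, 0 ≤ strat k h x) ∧ ∑ x, strat k h x = 1

/-- Joint distribution of `n` adaptive input-output pairs under channel `W`. -/
noncomputable def Qdist {X Y : Type*} [Fintype X] [Fintype Y] (W : X → Y → ℝ)
    (strat : (k : ℕ) → (Fin k → X × Y) → X → ℝ) (n : ℕ) (h : Fin n → X × Y) : ℝ :=
  ∏ k : Fin n,
    strat k.1 (fun j : Fin k.1 => h ⟨j.1, j.2.trans k.2⟩) (h k).1 * W (h k).1 (h k).2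

/-- Marginal distribution of the `(k+1)`-st input under channel `W`. -/
noncomputable def inMarg {X Y : Type*} [Fintype X] [Fintype Y] (W : X → Y → ℝ)
    (strat : (k : ℕ) → (Fin k → X × Y) → X → ℝ) (k : ℕ) (x : X) : ℝ :=
  ∑ h : Fin k → X × Y, Qdist W strat k h * strat k h x

/-- Kullback–Leibler divergence of finitely supported distributions. -/
noncomputable def Dkl {α : Type*} [Fintype α] (P Q : α → ℝ) : ℝ :=
  ∑ a, P a * Real.log (P a / Q a)

/-- `φ(s|P‖Q) = log ∑ Q^s P^{1-s}`. -/
noncomputable def phiRel {α : Type*} [Fintype α] (s : ℝ) (P Q : α → ℝ) : ℝ :=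
  Real.log (∑ a, Q a ^ s * P a ^ (1 - s))

/-- Log-sum inequality. -/
lemma log_sum_ineq {ι : Type*} (s : Finset ι) (p q : ι → ℝ)
    (hp : ∀ i ∈ s, 0 ≤ p i) (hq : ∀ i ∈ s, 0 ≤ q i)
    (hqp : ∀ i ∈ s, q i = 0 → p i = 0) :
    (∑ i ∈ s, p i) * Real.log ((∑ i ∈ s, p i) / (∑ i ∈ s, q i)) ≤
      ∑ i ∈ s, p i * Real.log (p i / q i) := by
  set P := ∑ i ∈ s, p i with hP
  set Q := ∑ i ∈ s, q i with hQ
  rcases eq_or_lt_of_le (Finset.sum_nonneg hp) with h0 | hPpos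
  · have hz : ∀ i ∈ s, p i = 0 := by
      intro i hi
      exact (Finset.sum_eq_zero_iff_of_nonneg hp).1 h0.symm i hi
    have hL : P = 0 := h0.symm
    rw [hL, zero_mul]
    exact Finset.sum_nonneg fun i hi => by rw [hz i hi]; simp
  · have hQpos : 0 < Q := by
      rcases eq_or_lt_of_le (Finset.sum_nonneg hq) with h0 | h; swap
      · exact h
      · exfalso
        have hz : ∀ i ∈ s, q i = 0 := (Finset.sum_eq_zero_iff_of_nonneg hq).1 h0.symm
        have : P = 0 := Finset.sum_eq_zero (fun i hi => hqp i hi (hz i hi))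
        linarith
    have key : ∀ i ∈ s, p i * Real.log (P / Q) + (p i - (P / Q) * q i) ≤
        p i * Real.log (p i / q i) := by
      intro i hi
      rcases eq_or_lt_of_le (hp i hi) with hpi | hpi
      · rw [← hpi]
        have : 0 ≤ (P / Q) * q i := mul_nonneg (by positivity) (hq i hi)
        linarith
      · have hqi : 0 < q i := by
          rcases eq_or_lt_of_le (hq i hi) with h | h
          · exact absurd (hqp i hi h.symm) (ne_of_gt hpi)
          · exact h
        have hr : 0 < q i * P / (p i * Q) := by positivity
        have hlog := Real.log_le_sub_one_of_pos hr
        have hexp : Real.log (q i * P / (p i * Q)) =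
            Real.log (P / Q) - Real.log (p i / q i) := by
          rw [Real.log_div (by positivity) (by positivity),
            Real.log_div (by positivity) (by positivity),
            Real.log_mul (by positivity) (by positivity),
            Real.log_mul (by positivity) (by positivity),
            Real.log_div (by positivity) (by positivity)]
          ring
        rw [hexp] at hlog
        have h2 : p i * (Real.log (P / Q) - Real.log (p i / q i)) ≤
            p i * (q i * P / (p i * Q) - 1) :=
          mul_le_mul_of_nonneg_left hlog (le_of_lt hpi)
        have h3 : p i * (q i * P / (p i * Q) - 1) = (P / Q) * q i - p i := by
          field_simp
        rw [h3] at h2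
        linarith
    calc P * Real.log (P / Q)
        = ∑ i ∈ s, (p i * Real.log (P / Q) + (p i - (P / Q) * q i)) := by
          rw [Finset.sum_add_distrib, ← Finset.sum_mul, Finset.sum_sub_distrib,
            ← Finset.mul_sum, ← hP, ← hQ]
          rw [div_mul_cancel₀ _ (ne_of_gt hQpos)]
          ring
      _ ≤ ∑ i ∈ s, p i * Real.log (p i / q i) := Finset.sum_le_sum key

section QdistLemmas

variable {X Y : Type*} [Fintype X] [Fintype Y]

/-- snoc equivalence -/
def snocEquiv (n : ℕ) (α : Type*) : ((Fin n → α) × α) ≃ (Fin (n + 1) → α) where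
  toFun p := Fin.snoc p.1 p.2
  invFun h := (Fin.init h, h (Fin.last n))
  left_inv p := by simp [Fin.init_snoc, Fin.snoc_last]
  right_inv h := by simp [Fin.snoc_init_self]

lemma sum_succ_eq {n : ℕ} (G : (Fin (n + 1) → X × Y) → ℝ) :
    ∑ h, G h = ∑ h : Fin n → X × Y, ∑ z : X × Y, G (Fin.snoc h z) := by
  have := Fintype.sum_equiv (snocEquiv n (X × Y)) (fun p => G (Fin.snoc p.1 p.2)) G
    (fun p => rfl)
  rw [← this, Fintype.sum_prod_type]

lemma Qdist_succ (W : X → Y → ℝ) (strat : (k : ℕ) → (Fin k → X × Y) → X → ℝ)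
    (n : ℕ) (h : Fin n → X × Y) (z : X × Y) :
    Qdist W strat (n + 1) (Fin.snoc h z) =
      Qdist W strat n h * (strat n h z.1 * W z.1 z.2) := by
  unfold Qdist
  rw [Fin.prod_univ_castSucc]
  congr 1
  · apply Finset.prod_congr rfl
    intro k _
    have e1 : (fun j : Fin (Fin.castSucc k).1 =>
        (Fin.snoc h z : Fin (n + 1) → X × Y) ⟨j.1, j.2.trans (Fin.castSucc k).2⟩)
        = fun j : Fin k.1 => h ⟨j.1, j.2.trans k.2⟩ := by
      funext j
      have : (⟨j.1, j.2.trans (Fin.castSucc k).2⟩ : Fin (n + 1)) =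
          Fin.castSucc ⟨j.1, j.2.trans k.2⟩ := rfl
      rw [this, Fin.snoc_castSucc]
    have e2 : (Fin.snoc h z : Fin (n + 1) → X × Y) (Fin.castSucc k) = h k := by
      simp
    rw [e2]
    exact congrArg (fun g => strat (k : ℕ) g (h k).1 * W (h k).1 (h k).2) e1
  · have e3 : (fun j : Fin (Fin.last n).1 =>
        (Fin.snoc h z : Fin (n + 1) → X × Y) ⟨j.1, j.2.trans (Fin.last n).2⟩)
        = h := by
      funext j
      have : (⟨j.1, j.2.trans (Fin.last n).2⟩ : Fin (n + 1)) = Fin.castSucc j := rfl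
      rw [this, Fin.snoc_castSucc]
    have e4 : (Fin.snoc h z : Fin (n + 1) → X × Y) (Fin.last n) = z := by
      simp
    rw [e4]
    exact congrArg (fun g => strat n g z.1 * W z.1 z.2) e3

lemma Qdist_nonneg {W : X → Y → ℝ} {strat : (k : ℕ) → (Fin k → X × Y) → X → ℝ}
    (hW : IsChannel W) (hstrat : IsStrategy strat) (n : ℕ) (h : Fin n → X × Y) :
    0 ≤ Qdist W strat n h :=
  Finset.prod_nonneg fun k _ =>
    mul_nonneg ((hstrat _ _).1 _) (le_of_lt ((hW _).1 _))

lemma Qdist_sum_one {W : X → Y → ℝ} {strat : (k : ℕ) → (Fin k → X × Y) → X → ℝ}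
    (hW : IsChannel W) (hstrat : IsStrategy strat) (n : ℕ) :
    ∑ h : Fin n → X × Y, Qdist W strat n h = 1 := by
  induction n with
  | zero => simp [Qdist]
  | succ n ih =>
    rw [sum_succ_eq (Qdist W strat (n + 1))]
    have : ∀ h : Fin n → X × Y,
        ∑ z : X × Y, Qdist W strat (n + 1) (Fin.snoc h z) = Qdist W strat n h := by
      intro h
      simp only [Qdist_succ]
      rw [← Finset.mul_sum, Fintype.sum_prod_type]
      have : ∑ x, ∑ y, strat n h x * W x y = 1 := by
        have : ∀ x, ∑ y, strat n h x * W x y = strat n h x := by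
          intro x; rw [← Finset.mul_sum, (hW x).2, mul_one]
        rw [Finset.sum_congr rfl fun x _ => this x, (hstrat n h).2]
      rw [this, mul_one]
    rw [Finset.sum_congr rfl fun h _ => this h, ih]

lemma Qdist_eq_zero_iff {W : X → Y → ℝ} {strat : (k : ℕ) → (Fin k → X × Y) → X → ℝ}
    (hW : IsChannel W) (n : ℕ) (h : Fin n → X × Y) :
    Qdist W strat n h = 0 ↔
      ∃ k : Fin n, strat k.1 (fun j : Fin k.1 => h ⟨j.1, j.2.trans k.2⟩) (h k).1 = 0 := by
  unfold Qdist
  rw [Finset.prod_eq_zero_iff]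
  constructor
  · rintro ⟨k, -, hk⟩
    rcases mul_eq_zero.1 hk with h1 | h1
    · exact ⟨k, h1⟩
    · exact absurd h1 (ne_of_gt ((hW _).1 _))
  · rintro ⟨k, hk⟩
    exact ⟨k, Finset.mem_univ k, by rw [hk, zero_mul]⟩

lemma Qdist_zero_iff_zero {W Wb : X → Y → ℝ} {strat : (k : ℕ) → (Fin k → X × Y) → X → ℝ}
    (hW : IsChannel W) (hWb : IsChannel Wb) (n : ℕ) (h : Fin n → X × Y) :
    Qdist W strat n h = 0 ↔ Qdist Wb strat n h = 0 := by
  rw [Qdist_eq_zero_iff hW, Qdist_eq_zero_iff hWb]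

end QdistLemmas

section Chain

variable {X Y : Type*} [Fintype X] [Fintype Y]

lemma Dkl_nonneg_of_dist {α : Type*} [Fintype α] (P Q : α → ℝ)
    (hP : ∀ a, 0 ≤ P a) (hQ : ∀ a, 0 ≤ Q a) (hP1 : ∑ a, P a = 1) (hQ1 : ∑ a, Q a = 1)
    (hQP : ∀ a, Q a = 0 → P a = 0) : 0 ≤ Dkl P Q := by
  have := log_sum_ineq Finset.univ P Q (fun a _ => hP a) (fun a _ => hQ a)
    (fun a _ => hQP a)
  rw [hP1, hQ1] at this
  simpa [Dkl] using this

lemma Dkl_Qdist_le {W Wb : X → Y → ℝ} (hW : IsChannel W) (hWb : IsChannel Wb)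
    {strat : (k : ℕ) → (Fin k → X × Y) → X → ℝ} (hstrat : IsStrategy strat)
    (C : ℝ) (hC : ∀ x, Dkl (W x) (Wb x) ≤ C) (hC0 : 0 ≤ C) (n : ℕ) :
    Dkl (Qdist W strat n) (Qdist Wb strat n) ≤ n * C := by
  induction n with
  | zero => simp [Dkl, Qdist]
  | succ n ih =>
    unfold Dkl
    rw [sum_succ_eq (fun h => Qdist W strat (n+1) h *
      Real.log (Qdist W strat (n+1) h / Qdist Wb strat (n+1) h))]
    have key : ∀ h : Fin n → X × Y,
        (∑ z : X × Y, Qdist W strat (n+1) (Fin.snoc h z) *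
          Real.log (Qdist W strat (n+1) (Fin.snoc h z) /
            Qdist Wb strat (n+1) (Fin.snoc h z))) ≤
        Qdist W strat n h *
          Real.log (Qdist W strat n h / Qdist Wb strat n h) +
        Qdist W strat n h * C := by
      intro h
      simp only [Qdist_succ]
      set PW := Qdist W strat n h with hPW
      set PWb := Qdist Wb strat n h with hPWb
      by_cases hP0 : PW = 0
      · simp [hP0]
      · have hPWpos : 0 < PW := lt_of_le_of_ne (Qdist_nonneg hW hstrat n h) (Ne.symm hP0)
        have hPWb0 : PWb ≠ 0 := by
          intro hc
          exact hP0 ((Qdist_zero_iff_zero hW hWb n h).2 hc)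
        have hPWbpos : 0 < PWb := lt_of_le_of_ne (Qdist_nonneg hWb hstrat n h) (Ne.symm hPWb0)
        rw [Fintype.sum_prod_type]
        have inner_eq : ∀ x : X,
            (∑ y : Y, PW * (strat n h x * W x y) *
              Real.log (PW * (strat n h x * W x y) / (PWb * (strat n h x * Wb x y)))) =
            PW * strat n h x * Real.log (PW / PWb)
              + PW * strat n h x * Dkl (W x) (Wb x) := by
          intro x
          by_cases hs : strat n h x = 0
          · simp [hs]
          · have hspos : 0 < strat n h x := lt_of_le_of_ne ((hstrat n h).1 x) (Ne.symm hs)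
            have term_eq : ∀ y : Y,
                PW * (strat n h x * W x y) *
                  Real.log (PW * (strat n h x * W x y) / (PWb * (strat n h x * Wb x y))) =
                PW * strat n h x * W x y * Real.log (PW / PWb)
                  + PW * strat n h x * (W x y * Real.log (W x y / Wb x y)) := by
              intro y
              have hWy : 0 < W x y := (hW x).1 y
              have hWby : 0 < Wb x y := (hWb x).1 y
              have harg : PW * (strat n h x * W x y) / (PWb * (strat n h x * Wb x y)) =
                  (PW / PWb) * (W x y / Wb x y) := by
                field_simp
              rw [harg, Real.log_mul (by positivity) (by positivity)]
              ring
            rw [Finset.sum_congr rfl fun y _ => term_eq y]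
            rw [Finset.sum_add_distrib, ← Finset.sum_mul]
            have h1 : (∑ y : Y, PW * strat n h x * W x y) = PW * strat n h x := by
              rw [← Finset.mul_sum, (hW x).2, mul_one]
            have h2 : (∑ y : Y, PW * strat n h x * (W x y * Real.log (W x y / Wb x y))) =
                PW * strat n h x * Dkl (W x) (Wb x) := by
              rw [← Finset.mul_sum]; rfl
            rw [h2, h1]
        rw [Finset.sum_congr rfl fun x _ => inner_eq x]
        rw [Finset.sum_add_distrib]
        have h3 : (∑ x, PW * strat n h x * Real.log (PW / PWb)) =
            PW * Real.log (PW / PWb) := by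
          rw [← Finset.sum_mul, ← Finset.mul_sum, (hstrat n h).2, mul_one]
        have h4 : (∑ x, PW * strat n h x * Dkl (W x) (Wb x)) ≤ PW * C := by
          calc (∑ x, PW * strat n h x * Dkl (W x) (Wb x))
              ≤ ∑ x, PW * strat n h x * C := by
                apply Finset.sum_le_sum
                intro x _
                exact mul_le_mul_of_nonneg_left (hC x)
                  (mul_nonneg (le_of_lt hPWpos) ((hstrat n h).1 x))
            _ = PW * C := by
                rw [← Finset.sum_mul, ← Finset.mul_sum, (hstrat n h).2, mul_one]
        rw [h3]
        linarith
    calc (∑ h : Fin n → X × Y, ∑ z : X × Y, Qdist W strat (n+1) (Fin.snoc h z) *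
            Real.log (Qdist W strat (n+1) (Fin.snoc h z) /
              Qdist Wb strat (n+1) (Fin.snoc h z)))
        ≤ ∑ h : Fin n → X × Y, (Qdist W strat n h *
            Real.log (Qdist W strat n h / Qdist Wb strat n h) + Qdist W strat n h * C) :=
          Finset.sum_le_sum fun h _ => key h
      _ = Dkl (Qdist W strat n) (Qdist Wb strat n) + (∑ h, Qdist W strat n h) * C := by
          rw [Finset.sum_add_distrib, ← Finset.sum_mul]; rfl
      _ ≤ n * C + 1 * C := by
          rw [Qdist_sum_one hW hstrat n]
          linarith
      _ = (n + 1 : ℕ) * C := by push_cast; ring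

end Chain

lemma dpi_binary {α : Type*} [Fintype α] (P Q : α → ℝ) (f : α → ℝ)
    (hP : ∀ a, 0 ≤ P a) (hQ : ∀ a, 0 ≤ Q a) (hQP : ∀ a, Q a = 0 → P a = 0)
    (hf : ∀ a, f a ∈ Set.Icc (0 : ℝ) 1) :
    (∑ a, P a * f a) * Real.log ((∑ a, P a * f a) / (∑ a, Q a * f a)) +
      (∑ a, P a * (1 - f a)) *
        Real.log ((∑ a, P a * (1 - f a)) / (∑ a, Q a * (1 - f a))) ≤
    Dkl P Q := by
  have key : ∀ g : α → ℝ, (∀ a, 0 ≤ g a) →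
      (∑ a, P a * g a) * Real.log ((∑ a, P a * g a) / (∑ a, Q a * g a)) ≤
        ∑ a, P a * g a * Real.log (P a / Q a) := by
    intro g hg
    have h := log_sum_ineq Finset.univ (fun a => P a * g a) (fun a => Q a * g a)
      (fun a _ => mul_nonneg (hP a) (hg a)) (fun a _ => mul_nonneg (hQ a) (hg a))
      (fun a _ hz => by
        rcases mul_eq_zero.1 hz with h1 | h1
        · rw [hQP a h1, zero_mul]
        · rw [h1, mul_zero])
    refine le_trans h (le_of_eq (Finset.sum_congr rfl fun a _ => ?_))
    by_cases hpg : P a * g a = 0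
    · rw [hpg, zero_mul, zero_mul]
    · have hPa : P a ≠ 0 := fun hc => hpg (by rw [hc, zero_mul])
      have hga : g a ≠ 0 := fun hc => hpg (by rw [hc, mul_zero])
      rw [mul_div_mul_comm]
      rw [div_self hga, mul_one]
  have h1 := key f (fun a => (hf a).1)
  have h2 := key (fun a => 1 - f a) (fun a => sub_nonneg.2 (hf a).2)
  have hsum : (∑ a, P a * f a * Real.log (P a / Q a)) +
      (∑ a, P a * (1 - f a) * Real.log (P a / Q a)) = Dkl P Q := by
    rw [← Finset.sum_add_distrib]
    exact Finset.sum_congr rfl fun a _ => by ring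
  unfold Dkl at hsum ⊢
  linarith

/-- `-1 ≤ a log(a/b)` for `a, b ∈ [0,1]`. -/
lemma neg_one_le_mul_log (a b : ℝ) (ha0 : 0 ≤ a) (ha1 : a ≤ 1) (hb0 : 0 ≤ b)
    (hb1 : b ≤ 1) : -1 ≤ a * Real.log (a / b) := by
  rcases eq_or_lt_of_le hb0 with hb | hb
  · rw [← hb, div_zero, Real.log_zero, mul_zero]; norm_num
  rcases eq_or_lt_of_le ha0 with ha | ha
  · rw [← ha, zero_mul]; norm_num
  have h1 : a ≤ a / b := by
    rw [le_div_iff₀ hb]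
    nlinarith
  have h2 : Real.log a ≤ Real.log (a / b) := Real.log_le_log ha h1
  have h3 : Real.log (1 / a) ≤ 1 / a - 1 := Real.log_le_sub_one_of_pos (by positivity)
  rw [Real.log_div one_ne_zero (ne_of_gt ha), Real.log_one] at h3
  have h4 : a - 1 ≤ a * Real.log a := by
    have := mul_le_mul_of_nonneg_left h3 (le_of_lt ha)
    have e : a * (1 / a - 1) = 1 - a := by field_simp
    nlinarith
  nlinarith [mul_le_mul_of_nonneg_left h2 (le_of_lt ha)]

set_option maxHeartbeats 2000000 in
theorem stmt12 {X Y : Type*} [Fintype X] [Fintype Y] [Nonempty X]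
    (W Wb : X → Y → ℝ) (hW : IsChannel W) (hWb : IsChannel Wb)
    (strats : ℕ → (k : ℕ) → (Fin k → X × Y) → X → ℝ)
    (hstrats : ∀ n, IsStrategy (strats n))
    (f : (n : ℕ) → (Fin n → X × Y) → ℝ)
    (hf : ∀ n h, f n h ∈ Set.Icc (0 : ℝ) 1)
    (herr1 : Tendsto
      (fun n => ∑ h : Fin n → X × Y, Qdist W (strats n) n h * f n h)
      atTop (nhds 0)) :
    Filter.limsup
      (fun n : ℕ => (-1 / (n : ℝ)) *
        Real.log (∑ h : Fin n → X × Y, Qdist Wb (strats n) n h * (1 - f n h)))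
      atTop ≤ ⨆ x, Dkl (W x) (Wb x) := by
  classical
  set C := ⨆ x, Dkl (W x) (Wb x) with hCdef
  set u : ℕ → ℝ := fun n => (-1 / (n : ℝ)) *
      Real.log (∑ h : Fin n → X × Y, Qdist Wb (strats n) n h * (1 - f n h)) with hu
  have hCx : ∀ x, Dkl (W x) (Wb x) ≤ C := by
    intro x
    rw [hCdef]
    exact le_ciSup (Set.Finite.bddAbove (Set.finite_range (fun x => Dkl (W x) (Wb x)))) x
  have hDnn : ∀ x, 0 ≤ Dkl (W x) (Wb x) := fun x =>
    Dkl_nonneg_of_dist (W x) (Wb x) (fun y => le_of_lt ((hW x).1 y))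
      (fun y => le_of_lt ((hWb x).1 y)) (hW x).2 (hWb x).2
      (fun y hy => absurd hy (ne_of_gt ((hWb x).1 y)))
  have hC0 : 0 ≤ C := le_trans (hDnn (Classical.arbitrary X)) (hCx _)
  clear_value C
  have hβnn : ∀ n, 0 ≤ ∑ h : Fin n → X × Y, Qdist Wb (strats n) n h * (1 - f n h) :=
    fun n => Finset.sum_nonneg fun h _ =>
      mul_nonneg (Qdist_nonneg hWb (hstrats n) n h) (sub_nonneg.2 (hf n h).2)
  have hβle : ∀ n, (∑ h : Fin n → X × Y, Qdist Wb (strats n) n h * (1 - f n h)) ≤ 1 := by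
    intro n
    calc (∑ h : Fin n → X × Y, Qdist Wb (strats n) n h * (1 - f n h))
        ≤ ∑ h : Fin n → X × Y, Qdist Wb (strats n) n h := by
          apply Finset.sum_le_sum
          intro h _
          have := Qdist_nonneg hWb (hstrats n) n h
          nlinarith [(hf n h).1]
      _ = 1 := Qdist_sum_one hWb (hstrats n) n
  have hu0 : ∀ n, 0 ≤ u n := by
    intro n
    rw [hu]
    dsimp only
    have hlog : Real.log (∑ h : Fin n → X × Y,
        Qdist Wb (strats n) n h * (1 - f n h)) ≤ 0 := Real.log_nonpos (hβnn n) (hβle n)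
    have hn : (0 : ℝ) ≤ 1 / (n : ℝ) := by positivity
    have heq : -1 / (n : ℝ) * Real.log (∑ h : Fin n → X × Y,
        Qdist Wb (strats n) n h * (1 - f n h)) =
        (1 / (n : ℝ)) * (-(Real.log (∑ h : Fin n → X × Y,
          Qdist Wb (strats n) n h * (1 - f n h)))) := by ring
    rw [heq]
    exact mul_nonneg hn (neg_nonneg.2 hlog)
  have main : ∀ δ : ℝ, 0 < δ → Filter.limsup u atTop ≤ C + δ := by
    intro δ hδ
    set ε := (δ / 2) / (C + δ) with hε
    have hεpos : 0 < ε := by positivity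
    have hεC : ε * (C + δ) = δ / 2 := by
      rw [hε]; field_simp
    have hεlt : ε < 1 := by
      rw [hε, div_lt_one (by linarith)]; linarith
    clear_value ε
    have hev1 : ∀ᶠ n in atTop,
        (∑ h : Fin n → X × Y, Qdist W (strats n) n h * f n h) < ε :=
      herr1.eventually_lt_const hεpos
    have hev2 : ∀ᶠ n : ℕ in atTop, (4 / δ : ℝ) ≤ (n : ℝ) :=
      tendsto_natCast_atTop_atTop.eventually_ge_atTop (4 / δ)
    apply Filter.limsup_le_of_le (isCoboundedUnder_le_of_le atTop hu0)
    filter_upwards [hev1, hev2, eventually_ge_atTop 1] with n han hn4 hn1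
    have hnpos : (0 : ℝ) < n := by exact_mod_cast hn1
    set P : (Fin n → X × Y) → ℝ := Qdist W (strats n) n with hP
    set Q : (Fin n → X × Y) → ℝ := Qdist Wb (strats n) n with hQ
    set a := ∑ h : Fin n → X × Y, P h * f n h with ha
    set b := ∑ h : Fin n → X × Y, Q h * f n h with hb
    set β := ∑ h : Fin n → X × Y, Q h * (1 - f n h) with hβ
    have hPnn : ∀ h, 0 ≤ P h := fun h => Qdist_nonneg hW (hstrats n) n h
    have hQnn : ∀ h, 0 ≤ Q h := fun h => Qdist_nonneg hWb (hstrats n) n h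
    have hQP : ∀ h, Q h = 0 → P h = 0 := fun h hz =>
      (Qdist_zero_iff_zero hW hWb n h).2 hz
    have hPQ : ∀ h, P h = 0 → Q h = 0 := fun h hz =>
      (Qdist_zero_iff_zero hW hWb n h).1 hz
    have hP1 : ∑ h, P h = 1 := Qdist_sum_one hW (hstrats n) n
    have hchain : Dkl P Q ≤ (n : ℝ) * C :=
      Dkl_Qdist_le hW hWb (hstrats n) C hCx hC0 n
    have hdpi := dpi_binary P Q (f n) hPnn hQnn hQP (hf n)
    have hPf1 : (∑ h, P h * (1 - f n h)) = 1 - a := by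
      rw [ha]
      rw [Finset.sum_congr rfl (fun h _ => mul_one_sub (P h) (f n h)),
        Finset.sum_sub_distrib, hP1]
    rw [hPf1] at hdpi
    have hann : 0 ≤ a := Finset.sum_nonneg fun h _ => mul_nonneg (hPnn h) (hf n h).1
    have halt : a < ε := han
    have ha1 : a < 1 := lt_trans halt hεlt
    have hbnn : 0 ≤ b := Finset.sum_nonneg fun h _ => mul_nonneg (hQnn h) (hf n h).1
    have hb1 : b ≤ 1 := by
      calc b ≤ ∑ h, Q h := Finset.sum_le_sum fun h _ => by
              nlinarith [(hf n h).2, hQnn h, (hf n h).1]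
        _ = 1 := Qdist_sum_one hWb (hstrats n) n
    have hm1 := neg_one_le_mul_log a b hann (le_of_lt ha1) hbnn hb1
    -- β > 0
    have hβpos : 0 < β := by
      rcases eq_or_lt_of_le (hβnn n) with h0 | h; swap
      · exact h
      · exfalso
        have hz : ∀ h ∈ Finset.univ, Q h * (1 - f n h) = 0 :=
          (Finset.sum_eq_zero_iff_of_nonneg (fun h _ =>
            mul_nonneg (hQnn h) (sub_nonneg.2 (hf n h).2))).1 h0.symm
        have h1a : 1 - a = 0 := by
          rw [← hPf1]
          apply Finset.sum_eq_zero
          intro h _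
          by_cases hPh : P h = 0
          · rw [hPh, zero_mul]
          · have hQh : Q h ≠ 0 := fun hc => hPh (hQP h hc)
            rcases mul_eq_zero.1 (hz h (Finset.mem_univ h)) with hc | hc
            · exact absurd hc hQh
            · rw [hc, mul_zero]
        linarith
    have h1apos : 0 < 1 - a := by linarith
    have hsplit : Real.log ((1 - a) / β) = Real.log (1 - a) - Real.log β :=
      Real.log_div (ne_of_gt h1apos) (ne_of_gt hβpos)
    have hm2 := neg_one_le_mul_log (1 - a) 1 (le_of_lt h1apos) (by linarith)
      zero_le_one le_rfl
    rw [div_one] at hm2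
    -- (1-a)*(-log β) ≤ nC + 2
    have hkey : (1 - a) * (-Real.log β) ≤ (n : ℝ) * C + 2 := by
      have := hdpi
      rw [hsplit] at this
      nlinarith [hchain]
    have hstep1 : -Real.log β ≤ ((n : ℝ) * C + 2) / (1 - a) := by
      rw [le_div_iff₀ h1apos]
      linarith [hkey]
    have hnC : 0 ≤ (n : ℝ) * C + 2 := by nlinarith [mul_nonneg (le_of_lt hnpos) hC0]
    have hstep2 : ((n : ℝ) * C + 2) / (1 - a) ≤ ((n : ℝ) * C + 2) / (1 - ε) :=
      div_le_div_of_nonneg_left hnC (by linarith) (by linarith)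
    have hfinal : (((n : ℝ) * C + 2) / (1 - ε)) / n ≤ C + δ := by
      rw [div_div, div_le_iff₀ (mul_pos (by linarith : (0:ℝ) < 1 - ε) hnpos)]
      have hnδ : 4 ≤ (n : ℝ) * δ := by
        rw [div_le_iff₀ hδ] at hn4
        linarith
      have h5 : ε * (C + δ) * (n : ℝ) = δ / 2 * (n : ℝ) := by rw [hεC]
      nlinarith [h5, hnδ]
    show (-1 / (n : ℝ)) * Real.log β ≤ C + δ
    have heq : (-1 / (n : ℝ)) * Real.log β = (-Real.log β) / n := by ring
    rw [heq]
    have hs3 : (-Real.log β) / (n : ℝ) ≤ (((n : ℝ) * C + 2) / (1 - ε)) / (n : ℝ) :=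
      (div_le_div_iff_of_pos_right hnpos).2 (le_trans hstep1 hstep2)
    exact le_trans hs3 hfinal
  by_contra hcon
  push_neg at hcon
  have hδ : 0 < (Filter.limsup u atTop - C) / 2 := by linarith
  have := main _ hδ
  linarith
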